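/- Let σ(t) = 1/(1 + exp(−t)) and φ(u) = exp(−u²/2)/√(2π). On the space {−1,1} × ℝ × {−1,1} equipped with the product of counting measure, Lebesgue measure, and counting measure, let μ_L be the measure with density (a, x, y) ↦ (1/2)·(σ(2a)·φ(x − a − 1) + σ(−2a)·φ(x − a + 1))·σ(2·x·y), and let μ_R be the measure with density (a, x, y) ↦ (1/2)·σ(2·a·y)·φ(x − a − y). Then μ_L = μ_R, and both are probability measures. -/

import Mathlib

open MeasureTheory

/-- The logistic sigmoid `σ(t) = 1 / (1 + exp (-t))`. -/
noncomputable def sigmoid (t : ℝ) : ℝ := 1 / (1 + Real.exp (-t))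

/-- The standard Gaussian density `φ(u) = exp (-u² / 2) / √(2π)`. -/
noncomputable def gaussPdf (u : ℝ) : ℝ :=
  Real.exp (-u ^ 2 / 2) / Real.sqrt (2 * Real.pi)

/-- The two-point space `{-1, 1} ⊆ ℝ`. -/
abbrev TwoPoint : Type := ({-1, 1} : Set ℝ)

/-- The product of counting measure, Lebesgue measure and counting measure on
`{-1, 1} × ℝ × {-1, 1}`. -/
noncomputable def baseMeasure : Measure (TwoPoint × ℝ × TwoPoint) :=
  (Measure.count : Measure TwoPoint).prod
    ((volume : Measure ℝ).prod (Measure.count : Measure TwoPoint))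


lemma one_add_exp_ne (t : ℝ) : (1 + Real.exp t) ≠ 0 := by positivity

lemma sigmoid_add_neg (t : ℝ) : sigmoid t + sigmoid (-t) = 1 := by
  unfold sigmoid
  rw [neg_neg, Real.exp_neg]
  have h := Real.exp_ne_zero t
  field_simp
  ring

lemma key (x : ℝ) :
    sigmoid 2 * gaussPdf (x - 2) * sigmoid (-(2 * x)) =
      sigmoid (-2) * gaussPdf x * sigmoid (2 * x) := by
  unfold sigmoid gaussPdf
  rw [neg_neg, neg_neg]
  have h1 : Real.exp (-(x - 2) ^ 2 / 2) * Real.exp 2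
      = Real.exp (-x ^ 2 / 2) * Real.exp (2 * x) := by
    rw [← Real.exp_add, ← Real.exp_add]; congr 1; ring
  have h2 : Real.exp (-(2 * x)) * Real.exp (2 * x) = 1 := by
    rw [← Real.exp_add]; simp
  have h3 : Real.exp (-2 : ℝ) * Real.exp 2 = 1 := by
    rw [← Real.exp_add]; simp
  have hs : Real.sqrt (2 * Real.pi) ≠ 0 := by positivity
  have d1 := one_add_exp_ne (-2 : ℝ)
  have d2 := one_add_exp_ne (2 : ℝ)
  have d3 := one_add_exp_ne (-(2 * x))
  have d4 := one_add_exp_ne (2 * x)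
  rw [neg_div, neg_div] at h1
  field_simp
  set S := Real.sqrt 2 * Real.sqrt Real.pi with hS
  set G := Real.exp (-(x - 2) ^ 2 / 2)
  set A := Real.exp (-x ^ 2 / 2)
  set B := Real.exp (2 * x)
  set C := Real.exp (-(2 * x))
  set D := Real.exp (2 : ℝ)
  set E := Real.exp (-2 : ℝ)
  linear_combination ((1 + C + E + C * E)) * h1 + ((Real.exp (-(x ^ 2 / 2)) + Real.exp (-(x ^ 2 / 2)) * E)) * h2
    + (-((Real.exp (-((x - 2) ^ 2 / 2)) + Real.exp (-((x - 2) ^ 2 / 2)) * C))) * h3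

lemma gaussPdf_neg (u : ℝ) : gaussPdf (-u) = gaussPdf u := by
  simp [gaussPdf, neg_sq]

lemma key' (x : ℝ) :
    sigmoid 2 * gaussPdf (x + 2) * sigmoid (2 * x) =
      sigmoid (-2) * gaussPdf x * sigmoid (-(2 * x)) := by
  have h := key (-x)
  rw [show (-x - 2 : ℝ) = -(x + 2) by ring, gaussPdf_neg, gaussPdf_neg,
    show (2 * -x : ℝ) = -(2 * x) by ring, neg_neg] at h
  linarith [h]

lemma density_eq (a y x : ℝ) (ha : a = -1 ∨ a = 1) (hy : y = -1 ∨ y = 1) :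
    (1 / 2) * (sigmoid (2 * a) * gaussPdf (x - a - 1) +
        sigmoid (-(2 * a)) * gaussPdf (x - a + 1)) * sigmoid (2 * x * y) =
      (1 / 2) * sigmoid (2 * a * y) * gaussPdf (x - a - y) := by
  have L := sigmoid_add_neg (2 * x)
  rcases ha with rfl | rfl <;> rcases hy with rfl | rfl
  · rw [show (2 * (-1 : ℝ)) = -2 by ring, show (x - (-1) - 1 : ℝ) = x by ring,
      show (-(-2) : ℝ) = 2 by ring, show (x - (-1) + 1 : ℝ) = x + 2 by ring,
      show (2 * x * (-1) : ℝ) = -(2 * x) by ring,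
      show ((-2 : ℝ) * (-1)) = 2 by ring,
      show (x - (-1) - (-1) : ℝ) = x + 2 by ring]
    linear_combination (-(1 / 2)) * key' x +
      (1 / 2) * sigmoid 2 * gaussPdf (x + 2) * L
  · rw [show (2 * (-1 : ℝ)) = -2 by ring, show (x - (-1) - 1 : ℝ) = x by ring,
      show (-(-2) : ℝ) = 2 by ring, show (x - (-1) + 1 : ℝ) = x + 2 by ring,
      show (2 * x * (1 : ℝ)) = 2 * x by ring,
      show ((-2 : ℝ) * 1) = -2 by ring]
    linear_combination (1 / 2) * key' x +
      (1 / 2) * sigmoid (-2) * gaussPdf x * L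
  · rw [show (2 * (1 : ℝ)) = 2 by ring, show (x - 1 - 1 : ℝ) = x - 2 by ring,
      show (x - 1 + 1 : ℝ) = x by ring,
      show (2 * x * (-1) : ℝ) = -(2 * x) by ring,
      show ((2 : ℝ) * (-1)) = -2 by ring,
      show (x - 1 - (-1) : ℝ) = x by ring]
    linear_combination (1 / 2) * key x +
      (1 / 2) * sigmoid (-2) * gaussPdf x * L
  · rw [show (2 * (1 : ℝ)) = 2 by ring, show (x - 1 - 1 : ℝ) = x - 2 by ring,
      show (x - 1 + 1 : ℝ) = x by ring,
      show (2 * x * (1 : ℝ)) = 2 * x by ring,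
      show ((2 : ℝ) * 1) = 2 by ring]
    linear_combination (-(1 / 2)) * key x +
      (1 / 2) * sigmoid 2 * gaussPdf (x - 2) * L

lemma sigmoid_nonneg (t : ℝ) : 0 ≤ sigmoid t := by unfold sigmoid; positivity
lemma gaussPdf_nonneg (u : ℝ) : 0 ≤ gaussPdf u := by unfold gaussPdf; positivity

lemma continuous_sigmoid' : Continuous sigmoid := by
  unfold sigmoid
  exact continuous_const.div (by continuity) (fun t => one_add_exp_ne (-t))

lemma continuous_gaussPdf : Continuous gaussPdf := by
  unfold gaussPdf
  exact (by continuity : Continuous fun u : ℝ => Real.exp (-u ^ 2 / 2)).div_const _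

lemma integrable_gaussPdf_sub (c : ℝ) : Integrable (fun x => gaussPdf (x - c)) := by
  have h : Integrable (fun x : ℝ => Real.exp (-(1/2 : ℝ) * x ^ 2)) :=
    integrable_exp_neg_mul_sq (by norm_num)
  have h2 := (h.comp_sub_right c).div_const (Real.sqrt (2 * Real.pi))
  refine h2.congr (Filter.Eventually.of_forall fun x => ?_)
  simp only [Function.comp, gaussPdf]
  congr 1
  ring_nf

lemma integral_gaussPdf_sub (c : ℝ) : ∫ x, gaussPdf (x - c) = 1 := by
  rw [integral_sub_right_eq_self (fun x => gaussPdf x) c]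
  unfold gaussPdf
  rw [integral_div]
  have : (fun x : ℝ => Real.exp (-x ^ 2 / 2)) = fun x => Real.exp (-(1/2 : ℝ) * x ^ 2) := by
    funext x; congr 1; ring
  rw [this, integral_gaussian]
  rw [show Real.pi / (1/2) = 2 * Real.pi by ring]
  exact div_self (by positivity)

instance : Finite TwoPoint :=
  ((Set.finite_singleton (1:ℝ)).insert (-1)).to_subtype

open Classical in
noncomputable def boolEquiv : Bool ≃ TwoPoint where
  toFun := fun b => if b then ⟨1, Or.inr rfl⟩ else ⟨-1, Or.inl rfl⟩
  invFun := fun a => if (a : ℝ) = 1 then true else false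
  left_inv := by rintro (_ | _) <;> norm_num
  right_inv := by
    rintro ⟨v, hv⟩
    simp only [Set.mem_insert_iff, Set.mem_singleton_iff] at hv
    rcases hv with h | h <;> subst h <;> norm_num

lemma tsum_twoPoint (g : TwoPoint → ENNReal) :
    ∑' a, g a = g ⟨-1, Or.inl rfl⟩ + g ⟨1, Or.inr rfl⟩ := by
  rw [← boolEquiv.tsum_eq, tsum_bool]
  rfl

noncomputable def densR : TwoPoint × ℝ × TwoPoint → ENNReal := fun q =>
  ENNReal.ofReal ((1 / 2) * sigmoid (2 * (q.1 : ℝ) * (q.2.2 : ℝ)) *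
      gaussPdf (q.2.1 - (q.1 : ℝ) - (q.2.2 : ℝ)))

lemma measurable_densR : Measurable densR := by
  unfold densR
  have m1 : Measurable fun q : TwoPoint × ℝ × TwoPoint => (q.1 : ℝ) :=
    measurable_subtype_coe.comp measurable_fst
  have m2 : Measurable fun q : TwoPoint × ℝ × TwoPoint => q.2.1 :=
    measurable_fst.comp measurable_snd
  have m3 : Measurable fun q : TwoPoint × ℝ × TwoPoint => (q.2.2 : ℝ) :=
    measurable_subtype_coe.comp (measurable_snd.comp measurable_snd)
  exact ((measurable_const.mul (continuous_sigmoid'.measurable.comp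
    ((measurable_const.mul m1).mul m3))).mul (continuous_gaussPdf.measurable.comp
    ((m2.sub m1).sub m3))).ennreal_ofReal

lemma inner_integral (a : ℝ) (x : ℝ) :
    (1 / 2 : ℝ) * sigmoid (2 * a * (-1)) * gaussPdf (x - a - (-1)) +
      (1 / 2) * sigmoid (2 * a * 1) * gaussPdf (x - a - 1) =
    (1 / 2) * sigmoid (-(2 * a)) * gaussPdf (x - (a - 1)) +
      (1 / 2) * sigmoid (2 * a) * gaussPdf (x - (a + 1)) := by
  rw [show (2 * a * (-1) : ℝ) = -(2 * a) by ring, show (2 * a * 1 : ℝ) = 2 * a by ring,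
    show (x - a - (-1) : ℝ) = x - (a - 1) by ring, show (x - a - 1 : ℝ) = x - (a + 1) by ring]

lemma integral_mix (a : ℝ) :
    ∫ x, ((1 / 2 : ℝ) * sigmoid (-(2 * a)) * gaussPdf (x - (a - 1)) +
      (1 / 2) * sigmoid (2 * a) * gaussPdf (x - (a + 1))) = 1 / 2 := by
  rw [integral_add (((integrable_gaussPdf_sub (a - 1)).const_mul _))
    ((integrable_gaussPdf_sub (a + 1)).const_mul _),
    integral_const_mul, integral_const_mul, integral_gaussPdf_sub, integral_gaussPdf_sub]
  have := sigmoid_add_neg (2 * a)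
  linarith

lemma mass_densR : ∫⁻ q, densR q ∂baseMeasure = 1 := by
  rw [baseMeasure, lintegral_prod _ measurable_densR.aemeasurable]
  have inner : ∀ a : TwoPoint,
      (∫⁻ p, densR (a, p) ∂((volume : Measure ℝ).prod Measure.count))
        = ENNReal.ofReal (1 / 2) := by
    intro a
    have hm : Measurable fun p : ℝ × TwoPoint => densR (a, p) :=
      measurable_densR.comp measurable_prodMk_left
    rw [lintegral_prod _ hm.aemeasurable]
    have hx : ∀ x : ℝ, (∫⁻ y : TwoPoint, densR (a, x, y) ∂Measure.count)
        = ENNReal.ofReal ((1 / 2 : ℝ) * sigmoid (-(2 * (a:ℝ))) * gaussPdf (x - ((a:ℝ) - 1)) +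
            (1 / 2) * sigmoid (2 * (a:ℝ)) * gaussPdf (x - ((a:ℝ) + 1))) := by
      intro x
      rw [lintegral_count, tsum_twoPoint]
      unfold densR
      rw [← ENNReal.ofReal_add
        (mul_nonneg (mul_nonneg (by norm_num) (sigmoid_nonneg _)) (gaussPdf_nonneg _))
        (mul_nonneg (mul_nonneg (by norm_num) (sigmoid_nonneg _)) (gaussPdf_nonneg _))]
      exact congrArg ENNReal.ofReal (inner_integral (a : ℝ) x)
    have hint : Integrable (fun x : ℝ =>
        (1 / 2 : ℝ) * sigmoid (-(2 * (a:ℝ))) * gaussPdf (x - ((a:ℝ) - 1)) +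
          (1 / 2) * sigmoid (2 * (a:ℝ)) * gaussPdf (x - ((a:ℝ) + 1))) :=
      ((integrable_gaussPdf_sub ((a:ℝ) - 1)).const_mul _).add
        ((integrable_gaussPdf_sub ((a:ℝ) + 1)).const_mul _)
    rw [lintegral_congr hx,
      ← ofReal_integral_eq_lintegral_ofReal hint
        (Filter.Eventually.of_forall fun x => add_nonneg
          (mul_nonneg (mul_nonneg (by norm_num) (sigmoid_nonneg _)) (gaussPdf_nonneg _))
          (mul_nonneg (mul_nonneg (by norm_num) (sigmoid_nonneg _)) (gaussPdf_nonneg _))),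
      integral_mix]
  rw [lintegral_congr inner, lintegral_count, tsum_twoPoint,
    ← ENNReal.ofReal_add (by norm_num) (by norm_num)]
  norm_num


/-- **Theorem 1 (unidentifiability), measure-theoretic form.** The joint law
`μL` of `(A, X₁, Y)` in the left structural equation model and the joint law
`μR` of `(A, X₁, Y)` in the right structural equation model, expressed via
their densities w.r.t. counting × Lebesgue × counting measure on
`{-1,1} × ℝ × {-1,1}`, coincide, and both are probability measures. -/
theorem unidentifiability
    (μL μR : Measure (TwoPoint × ℝ × TwoPoint))
    (hμL : μL = baseMeasure.withDensity (fun q => ENNReal.ofReal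
      ((1 / 2) * (sigmoid (2 * (q.1 : ℝ)) * gaussPdf (q.2.1 - (q.1 : ℝ) - 1) +
          sigmoid (-(2 * (q.1 : ℝ))) * gaussPdf (q.2.1 - (q.1 : ℝ) + 1)) *
        sigmoid (2 * q.2.1 * (q.2.2 : ℝ)))))
    (hμR : μR = baseMeasure.withDensity (fun q => ENNReal.ofReal
      ((1 / 2) * sigmoid (2 * (q.1 : ℝ) * (q.2.2 : ℝ)) *
        gaussPdf (q.2.1 - (q.1 : ℝ) - (q.2.2 : ℝ))))) :
    μL = μR ∧ IsProbabilityMeasure μL ∧ IsProbabilityMeasure μR := by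
  have hLR : μL = μR := by
    rw [hμL, hμR]
    congr 1
    funext q
    obtain ⟨⟨a, ha⟩, x, ⟨y, hy⟩⟩ := q
    simp only [Set.mem_insert_iff, Set.mem_singleton_iff] at ha hy
    exact congrArg ENNReal.ofReal (density_eq a y x ha hy)
  have hmass : μR Set.univ = 1 := by
    rw [hμR, withDensity_apply _ MeasurableSet.univ, setLIntegral_univ]
    exact mass_densR
  exact ⟨hLR, by rw [hLR]; exact ⟨hmass⟩, ⟨hmass⟩⟩
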